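/- arXiv:2506.18461 — 3 statements merged into one kernel-verified Lean document; each statement's English description precedes it below -/
import Mathlib

section
/- For positive integers a and r, the sum ∑_{i=0}^{r} 1/(a+i)² is strictly greater than (r+1)/((a + r + 1 - ε_a)(a - ε_a)), where ε_a = (2a + 1 - √(4a² + 1))/2. -/
theorem stmt_2 (a r : ℕ) (ha : 0 < a) (hr : 0 < r) :
    (r + 1 : ℝ) /
        (((a : ℝ) + r + 1 - (2 * a + 1 - Real.sqrt (4 * a ^ 2 + 1)) / 2) *
          ((a : ℝ) - (2 * a + 1 - Real.sqrt (4 * a ^ 2 + 1)) / 2))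
      < ∑ i ∈ Finset.range (r + 1), 1 / ((a : ℝ) + i) ^ 2 := by
  set s : ℝ := Real.sqrt (4 * a ^ 2 + 1) with hs_def
  set ε : ℝ := (2 * a + 1 - s) / 2 with hε_def
  have ha1 : (1 : ℝ) ≤ (a : ℝ) := by exact_mod_cast ha
  have hs2 : s ^ 2 = 4 * a ^ 2 + 1 := Real.sq_sqrt (by positivity)
  have hs_pos : 0 < s := Real.sqrt_pos.mpr (by positivity)
  have hs_lt : s < 2 * a + 1 := by nlinarith
  have hs_gt : 2 * (a : ℝ) < s := by nlinarith
  have hε0 : 0 < ε := by rw [hε_def]; linarith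
  have hε2 : ε < 1 / 2 := by rw [hε_def]; linarith
  -- positivity of shifted denominators
  have hpos : ∀ i : ℕ, (0 : ℝ) < (a : ℝ) + i - ε := by
    intro i
    have : (0 : ℝ) ≤ (i : ℝ) := Nat.cast_nonneg i
    linarith
  set f : ℕ → ℝ := fun i => 1 / ((a : ℝ) + i - ε) with hf_def
  clear_value ε
  -- key product identity
  have key : ∀ i : ℕ, ((a : ℝ) + i - ε) * ((a : ℝ) + (i + 1) - ε)
      = ((a : ℝ) + i) ^ 2 + i * (1 - 2 * ε) := by
    intro i
    rw [hε_def]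
    clear_value s
    push_cast
    linear_combination (1 / 4 : ℝ) * hs2
  -- per-term bound
  have term_le : ∀ i ∈ Finset.range (r + 1),
      f i - f (i + 1) ≤ 1 / ((a : ℝ) + i) ^ 2 := by
    intro i _
    have h1 := hpos i
    have h2 := hpos (i + 1)
    have hsq : (0 : ℝ) < ((a : ℝ) + i) ^ 2 := by positivity
    have heq : f i - f (i + 1) = 1 / (((a : ℝ) + i - ε) * ((a : ℝ) + (i + 1) - ε)) := by
      rw [hf_def]
      push_cast at h1 h2 ⊢
      field_simp
      ring
    rw [heq]
    apply one_div_le_one_div_of_le hsq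
    rw [key i]
    have : (0 : ℝ) ≤ (i : ℝ) := Nat.cast_nonneg i
    nlinarith
  -- strict bound at i = r
  have term_lt : f r - f (r + 1) < 1 / ((a : ℝ) + r) ^ 2 := by
    have h1 := hpos r
    have h2 := hpos (r + 1)
    have hsq : (0 : ℝ) < ((a : ℝ) + r) ^ 2 := by positivity
    have heq : f r - f (r + 1) = 1 / (((a : ℝ) + r - ε) * ((a : ℝ) + (r + 1) - ε)) := by
      rw [hf_def]
      push_cast at h1 h2 ⊢
      field_simp
      ring
    rw [heq]
    apply one_div_lt_one_div_of_lt hsq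
    rw [key r]
    have hr1 : (1 : ℝ) ≤ (r : ℝ) := by exact_mod_cast hr
    nlinarith
  -- telescoping sum
  have htel : ∑ i ∈ Finset.range (r + 1), (f i - f (i + 1)) = f 0 - f (r + 1) :=
    Finset.sum_range_sub' f (r + 1)
  have hLHS : (r + 1 : ℝ) / (((a : ℝ) + r + 1 - ε) * ((a : ℝ) - ε))
      = ∑ i ∈ Finset.range (r + 1), (f i - f (i + 1)) := by
    rw [htel]
    have h0 := hpos 0
    have hR := hpos (r + 1)
    have h0' : (0 : ℝ) < (a : ℝ) - ε := by push_cast at h0; linarith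
    have hR' : (0 : ℝ) < (a : ℝ) + r + 1 - ε := by push_cast at hR; linarith
    have e0 : f 0 = 1 / ((a : ℝ) - ε) := by rw [hf_def]; norm_num
    have eR : f (r + 1) = 1 / ((a : ℝ) + r + 1 - ε) := by
      rw [hf_def]; push_cast; ring_nf
    rw [e0, eR, div_sub_div _ _ h0'.ne' hR'.ne', div_eq_div_iff (by positivity) (by positivity)]
    ring
  have hsum_lt : ∑ i ∈ Finset.range (r + 1), (f i - f (i + 1))
      < ∑ i ∈ Finset.range (r + 1), 1 / ((a : ℝ) + i) ^ 2 := by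
    apply Finset.sum_lt_sum term_le
    exact ⟨r, Finset.self_mem_range_succ r, term_lt⟩
  calc (r + 1 : ℝ) / (((a : ℝ) + r + 1 - ε) * ((a : ℝ) - ε))
      = ∑ i ∈ Finset.range (r + 1), (f i - f (i + 1)) := hLHS
    _ < _ := hsum_lt
end

section
/- For positive integers a and r, the sum ∑_{i=0}^{r} 1/(a+i)² is strictly less than (r+1)/((a + r + 1 - ε_{a+r})(a - ε_{a+r})), where ε_n = (2n + 1 - √(4n² + 1))/2. -/
theorem stmt_3 (a r : ℕ) (ha : 0 < a) (hr : 0 < r) :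
    ∑ i ∈ Finset.range (r + 1), 1 / ((a : ℝ) + i) ^ 2
      < (r + 1 : ℝ) /
          (((a : ℝ) + r + 1 - (2 * (a + r : ℕ) + 1 - Real.sqrt (4 * (a + r : ℕ) ^ 2 + 1)) / 2) *
            ((a : ℝ) - (2 * (a + r : ℕ) + 1 - Real.sqrt (4 * (a + r : ℕ) ^ 2 + 1)) / 2)) := by
  have ha1 : (1:ℝ) ≤ a := by exact_mod_cast ha
  have hr1 : (1:ℝ) ≤ r := by exact_mod_cast hr
  set s : ℝ := Real.sqrt (4 * ((a + r : ℕ):ℝ) ^ 2 + 1) with hsdef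
  have hNnat : ((a + r : ℕ) : ℝ) = (a:ℝ) + r := by push_cast; ring
  set N : ℝ := (a:ℝ) + r with hN
  have hs2 : s ^ 2 = 4 * N ^ 2 + 1 := by
    rw [hsdef, Real.sq_sqrt (by positivity), hNnat]
  have hsnn : 0 ≤ s := Real.sqrt_nonneg _
  have hN2 : (2:ℝ) ≤ N := by rw [hN]; linarith
  have hslb : 2 * N < s := by nlinarith
  have hsub : s < 2 * N + 1 := by nlinarith
  rw [hNnat]
  set ε : ℝ := (2 * N + 1 - s) / 2 with hεdef
  have hεpos : 0 < ε := by rw [hεdef]; linarith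
  have hεhalf : ε < 1 / 2 := by rw [hεdef]; linarith
  have hs' : s = 2 * N + 1 - 2 * ε := by rw [hεdef]; ring
  have hkey : ε ^ 2 = (2 * N + 1) * ε - N := by
    have h := hs2
    rw [hs'] at h
    linear_combination h / 4
  -- per-term facts
  have hxε : ∀ i : ℕ, 0 < (a:ℝ) + i - ε := by
    intro i
    have : (0:ℝ) ≤ i := Nat.cast_nonneg i
    linarith
  have hx1ε : ∀ i : ℕ, 0 < (a:ℝ) + i + 1 - ε := by
    intro i; have := hxε i; linarith
  have hterm_eq : ∀ i : ℕ,
      1 / (((a:ℝ) + i - ε) * ((a:ℝ) + i + 1 - ε))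
        = 1 / ((a:ℝ) + i - ε) - 1 / ((a:ℝ) + i + 1 - ε) := by
    intro i
    have h1 := hxε i
    have h2 := hx1ε i
    field_simp
    ring
  have hle : ∀ i ∈ Finset.range (r + 1),
      1 / ((a:ℝ) + i) ^ 2 ≤ 1 / ((a:ℝ) + i - ε) - 1 / ((a:ℝ) + i + 1 - ε) := by
    intro i hi
    have hi' : (i:ℝ) ≤ r := by
      exact_mod_cast Nat.lt_succ_iff.mp (Finset.mem_range.mp hi)
    have hxN : (a:ℝ) + i ≤ N := by rw [hN]; linarith
    have hprod : ((a:ℝ) + i - ε) * ((a:ℝ) + i + 1 - ε) ≤ ((a:ℝ) + i) ^ 2 := by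
      nlinarith [mul_nonneg (sub_nonneg.2 hxN) (by linarith : (0:ℝ) ≤ 1 - 2 * ε)]
    rw [← hterm_eq i]
    exact one_div_le_one_div_of_le (mul_pos (hxε i) (hx1ε i)) hprod
  have hlt0 : 1 / ((a:ℝ) + (0:ℕ)) ^ 2 < 1 / ((a:ℝ) + (0:ℕ) - ε) - 1 / ((a:ℝ) + (0:ℕ) + 1 - ε) := by
    have hxN : (a:ℝ) + (0:ℕ) < N := by rw [hN]; push_cast; linarith
    have hprod : ((a:ℝ) + (0:ℕ) - ε) * ((a:ℝ) + (0:ℕ) + 1 - ε) < ((a:ℝ) + (0:ℕ)) ^ 2 := by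
      nlinarith [mul_pos (sub_pos.2 hxN) (by linarith : (0:ℝ) < 1 - 2 * ε)]
    rw [← hterm_eq 0]
    exact one_div_lt_one_div_of_lt (mul_pos (hxε 0) (hx1ε 0)) hprod
  have hsumlt : ∑ i ∈ Finset.range (r + 1), 1 / ((a : ℝ) + i) ^ 2
      < ∑ i ∈ Finset.range (r + 1), (1 / ((a:ℝ) + i - ε) - 1 / ((a:ℝ) + i + 1 - ε)) :=
    Finset.sum_lt_sum hle ⟨0, Finset.mem_range.mpr (Nat.succ_pos r), hlt0⟩
  have tel : ∑ i ∈ Finset.range (r + 1), (1 / ((a:ℝ) + i - ε) - 1 / ((a:ℝ) + i + 1 - ε))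
      = 1 / ((a:ℝ) - ε) - 1 / ((a:ℝ) + (r + 1) - ε) := by
    have h := Finset.sum_range_sub' (fun i : ℕ => 1 / ((a:ℝ) + i - ε)) (r + 1)
    simp only [Nat.cast_add, Nat.cast_zero, Nat.cast_one, add_zero] at h
    rw [← h]
    exact Finset.sum_congr rfl fun i _ => by ring
  have hfin : 1 / ((a:ℝ) - ε) - 1 / ((a:ℝ) + (r + 1) - ε)
      = (r + 1 : ℝ) / (((a:ℝ) + r + 1 - ε) * ((a:ℝ) - ε)) := by
    have h1 : (0:ℝ) < (a:ℝ) - ε := by linarith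
    have h2 : (0:ℝ) < (a:ℝ) + r + 1 - ε := by linarith
    have h3 : (a:ℝ) + (r + 1) - ε = (a:ℝ) + r + 1 - ε := by ring
    rw [h3]
    field_simp
    ring
  calc ∑ i ∈ Finset.range (r + 1), 1 / ((a : ℝ) + i) ^ 2
      < ∑ i ∈ Finset.range (r + 1), (1 / ((a:ℝ) + i - ε) - 1 / ((a:ℝ) + i + 1 - ε)) := hsumlt
    _ = (r + 1 : ℝ) / (((a:ℝ) + r + 1 - ε) * ((a:ℝ) - ε)) := by rw [tel, hfin]
end

section
/- For positive integers a and r, there exists a real number η with ε_a < η < ε_{a+r} such that ∑_{i=0}^{r} 1/(a+i)² = (r+1)/((a + r + 1 - η)(a - η)). -/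
open Finset Real

noncomputable def eps (n : ℕ) : ℝ := ((2 * n + 1 : ℝ) - Real.sqrt (4 * n ^ 2 + 1)) / 2

lemma sqrt_sq_eq (n : ℕ) : Real.sqrt (4 * (n:ℝ) ^ 2 + 1) ^ 2 = 4 * (n:ℝ) ^ 2 + 1 :=
  Real.sq_sqrt (by positivity)

lemma sqrt_gt (n : ℕ) : 2 * (n:ℝ) < Real.sqrt (4 * (n:ℝ) ^ 2 + 1) := by
  have h := sqrt_sq_eq n
  nlinarith [Real.sqrt_nonneg (4 * (n:ℝ) ^ 2 + 1), Nat.cast_nonneg (α := ℝ) n]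

lemma eps_lt_half (n : ℕ) : eps n < 1 / 2 := by
  have := sqrt_gt n; unfold eps; linarith

lemma eps_nonneg (n : ℕ) : 0 ≤ eps n := by
  have h := sqrt_sq_eq n
  have h2 : Real.sqrt (4 * (n:ℝ) ^ 2 + 1) ≤ 2 * n + 1 := by
    nlinarith [Real.sqrt_nonneg (4 * (n:ℝ) ^ 2 + 1), Nat.cast_nonneg (α := ℝ) n]
  unfold eps; linarith

lemma eps_root (n : ℕ) : (eps n) ^ 2 - (2 * n + 1) * eps n + n = 0 := by
  have h := sqrt_sq_eq n
  unfold eps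
  nlinarith [h]

lemma eps_mono {m n : ℕ} (h : m < n) : eps m < eps n := by
  have h1 := sqrt_sq_eq m
  have h2 := sqrt_sq_eq n
  have h3 := sqrt_gt m
  have h4 := sqrt_gt n
  have hmn : (m:ℝ) < n := by exact_mod_cast h
  unfold eps
  have key : Real.sqrt (4 * (n:ℝ) ^ 2 + 1) - Real.sqrt (4 * (m:ℝ) ^ 2 + 1) < 2 * ((n:ℝ) - m) := by
    nlinarith [h1, h2, h3, h4, hmn]
  linarith

lemma sum_eq (a r : ℕ) (ha : 1 ≤ a) (ε : ℝ) (hε : ε < 1/2) :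
    ∑ i ∈ range (r+1), 1/(((a:ℝ)+i-ε) * ((a:ℝ)+i+1-ε))
      = ((r:ℝ)+1) / ((((a:ℝ)) + r + 1 - ε) * ((a:ℝ) - ε)) := by
  have ha1 : (1:ℝ) ≤ a := by exact_mod_cast ha
  have key : ∀ i : ℕ, 1/(((a:ℝ)+i-ε) * ((a:ℝ)+i+1-ε))
      = 1/((a:ℝ)+i-ε) - 1/((a:ℝ)+(i+1)-ε) := by
    intro i
    have hi : (0:ℝ) ≤ i := Nat.cast_nonneg i
    have d1 : (a:ℝ)+i-ε > 0 := by linarith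
    have d2 : (a:ℝ)+i+1-ε > 0 := by linarith
    have d1' : (a:ℝ)+i-ε ≠ 0 := ne_of_gt d1
    have d2' : (a:ℝ)+(i+1:ℕ)-ε ≠ 0 := by push_cast; intro h; linarith
    push_cast at d2' ⊢
    field_simp
    ring_nf
  calc ∑ i ∈ range (r+1), 1/(((a:ℝ)+i-ε) * ((a:ℝ)+i+1-ε))
      = ∑ i ∈ range (r+1), ((fun j : ℕ => 1/((a:ℝ)+j-ε)) i - (fun j : ℕ => 1/((a:ℝ)+j-ε)) (i+1)) := by
        refine Finset.sum_congr rfl fun i _ => ?_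
        simpa using key i
    _ = 1/((a:ℝ)+(0:ℕ)-ε) - 1/((a:ℝ)+((r+1:ℕ):ℝ)-ε) := by
        rw [Finset.sum_range_sub' (fun j : ℕ => 1/((a:ℝ)+j-ε)) (r+1)]
    _ = ((r:ℝ)+1) / ((((a:ℝ)) + r + 1 - ε) * ((a:ℝ) - ε)) := by
        have hr : (0:ℝ) ≤ r := Nat.cast_nonneg r
        have d1 : (a:ℝ) - ε > 0 := by linarith
        have d2 : (a:ℝ) + r + 1 - ε > 0 := by linarith
        have d1' : (a:ℝ) - ε ≠ 0 := ne_of_gt d1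
        have d2' : (a:ℝ) + ((r:ℝ)+1) - ε ≠ 0 := by intro h; linarith
        push_cast
        simp only [add_zero]
        field_simp
        ring

theorem stmt_4 (a r : ℕ) (ha : 0 < a) (hr : 0 < r) :
    ∃ η : ℝ,
      ((2 * a + 1 : ℝ) - Real.sqrt (4 * a ^ 2 + 1)) / 2 < η ∧
      η < ((2 * (a + r : ℕ) + 1 : ℝ) - Real.sqrt (4 * (a + r : ℕ) ^ 2 + 1)) / 2 ∧
      ∑ i ∈ Finset.range (r + 1), 1 / ((a : ℝ) + i) ^ 2
        = (r + 1 : ℝ) / (((a : ℝ) + r + 1 - η) * ((a : ℝ) - η)) := by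
  have ha1 : (1:ℝ) ≤ a := by exact_mod_cast ha
  have hr1 : (1:ℝ) ≤ r := by exact_mod_cast hr
  set S : ℝ := ∑ i ∈ Finset.range (r + 1), 1 / ((a : ℝ) + i) ^ 2 with hS
  set g : ℝ → ℝ := fun η => ((r:ℝ) + 1) / (((a : ℝ) + r + 1 - η) * ((a : ℝ) - η)) with hg
  have h1 := eps_lt_half a
  have h2 := eps_lt_half (a+r)
  have h01 := eps_nonneg a
  have h02 := eps_nonneg (a+r)
  -- lower bound : g (eps a) < S
  have lower : g (eps a) < S := by
    rw [hg]
    simp only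
    rw [← sum_eq a r ha (eps a) h1, hS]
    apply Finset.sum_lt_sum
    · intro i _
      have hi : (0:ℝ) ≤ i := Nat.cast_nonneg i
      have d1 : (0:ℝ) < (a:ℝ)+i-eps a := by linarith
      have d2 : (0:ℝ) < (a:ℝ)+i+1-eps a := by linarith
      have dk : (0:ℝ) < ((a:ℝ)+i)^2 := by positivity
      rw [div_le_div_iff₀ (by positivity) dk]
      nlinarith [eps_root a]
    · refine ⟨r, Finset.self_mem_range_succ r, ?_⟩
      have d1 : (0:ℝ) < (a:ℝ)+r-eps a := by linarith
      have d2 : (0:ℝ) < (a:ℝ)+r+1-eps a := by linarith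
      have dk : (0:ℝ) < ((a:ℝ)+r)^2 := by positivity
      rw [div_lt_div_iff₀ (by positivity) dk]
      nlinarith [eps_root a]
  -- upper bound : S < g (eps (a+r))
  have upper : S < g (eps (a+r)) := by
    rw [hg]
    simp only
    rw [← sum_eq a r ha (eps (a+r)) h2, hS]
    apply Finset.sum_lt_sum
    · intro i hi'
      have hir : (i:ℝ) ≤ r := by
        have := Finset.mem_range.mp hi'; exact_mod_cast Nat.lt_succ_iff.mp this
      have hi : (0:ℝ) ≤ i := Nat.cast_nonneg i
      have d1 : (0:ℝ) < (a:ℝ)+i-eps (a+r) := by linarith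
      have d2 : (0:ℝ) < (a:ℝ)+i+1-eps (a+r) := by linarith
      have dk : (0:ℝ) < ((a:ℝ)+i)^2 := by positivity
      have hroot := eps_root (a+r)
      push_cast at hroot
      rw [div_le_div_iff₀ dk (by positivity)]
      nlinarith [hroot]
    · refine ⟨0, Finset.mem_range.mpr (Nat.succ_pos r), ?_⟩
      have d1 : (0:ℝ) < (a:ℝ)+0-eps (a+r) := by push_cast; linarith
      have d2 : (0:ℝ) < (a:ℝ)+0+1-eps (a+r) := by push_cast; linarith
      have dk : (0:ℝ) < ((a:ℝ)+(0:ℕ))^2 := by positivity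
      have hroot := eps_root (a+r)
      push_cast at hroot ⊢
      rw [div_lt_div_iff₀ (by positivity) (by positivity)]
      nlinarith [hroot]
  -- IVT
  have hle : eps a ≤ eps (a+r) := (eps_mono (by omega)).le
  have hcont : ContinuousOn g (Set.Icc (eps a) (eps (a+r))) := by
    apply ContinuousOn.div continuousOn_const
    · fun_prop
    · intro x hx
      obtain ⟨hx1, hx2⟩ := hx
      have hxlt : x < 1/2 := lt_of_le_of_lt hx2 h2
      have hx0 : 0 ≤ x := le_trans h01 hx1
      have : (0:ℝ) < ((a:ℝ) + r + 1 - x) * ((a:ℝ) - x) := by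
        apply mul_pos <;> linarith
      exact ne_of_gt this
  have hmem : S ∈ Set.Ioo (g (eps a)) (g (eps (a+r))) := ⟨lower, upper⟩
  obtain ⟨η, hη, hgη⟩ := intermediate_value_Ioo hle hcont hmem
  refine ⟨η, ?_, ?_, ?_⟩
  · have := hη.1
    unfold eps at this
    push_cast at this ⊢
    linarith
  · have := hη.2
    unfold eps at this
    push_cast at this ⊢
    linarith
  · exact hgη.symm
end
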